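/- arXiv:1908.04560 — 6 statements merged into one kernel-verified Lean document; each statement's English description precedes it below -/
import Mathlib

section
/- Let s and positive integers N₁ ≥ N₂ ≥ ⋯ ≥ Nₘ ≥ 2 be given, and let τ(s) be the number of tuples (d₁,…,dₘ) with 1 ≤ dᵢ ≤ Nᵢ and ∏ dᵢ = s. Suppose s > 1 is a perfect square and not prime, and let K be the number of indices i with s ≤ Nᵢ. Then τ(s) ≥ K + K(K−1)/2. -/
/-- auxiliary tuple: `t` at `i` and `j` (or `s` at `i` if `i = j`), `1` elsewhere. -/
def ddAux {m : ℕ} (s t : ℕ) (i j : Fin m) : Fin m → ℕ :=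
  fun k => if k = i then (if j = i then s else t) else if k = j then t else 1

theorem ddAux_support {m : ℕ} (s t : ℕ) (hs : 2 ≤ s) (ht : 2 ≤ t) (i j : Fin m) :
    {x | ddAux s t i j x ≠ 1} = {i, j} := by
  ext x
  simp only [ddAux, Set.mem_setOf_eq, Set.mem_insert_iff, Set.mem_singleton_iff]
  by_cases hxi : x = i
  · have h1 : (if j = i then s else t) ≠ 1 := by split <;> omega
    simp [hxi, h1]
  · by_cases hxj : x = j
    · subst hxj
      have h2 : t ≠ 1 := by omega
      simp [hxi, h2]
    · simp [hxi, hxj]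

theorem ddAux_inj {m : ℕ} (s t : ℕ) (hs : 2 ≤ s) (ht : 2 ≤ t) (i j k l : Fin m)
    (hij : i ≤ j) (hkl : k ≤ l) (h : ddAux s t i j = ddAux s t k l) :
    i = k ∧ j = l := by
  have hsupp : ({i, j} : Set (Fin m)) = {k, l} := by
    rw [← ddAux_support s t hs ht i j, ← ddAux_support s t hs ht k l, h]
  rcases Set.pair_eq_pair_iff.mp hsupp with ⟨h1, h2⟩ | ⟨h1, h2⟩
  · exact ⟨h1, h2⟩
  · have hik : i = k := le_antisymm (hij.trans (le_of_eq h2)) (hkl.trans (le_of_eq h1.symm))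
    have hjl : j = l := le_antisymm ((le_of_eq h2).trans hkl) ((le_of_eq h1.symm).trans hij)
    exact ⟨hik, hjl⟩

/-- if `s > 1` is a composite perfect square then
`τ(s) ≥ K + K(K-1)/2` where `K` is the number of indices with `s ≤ Nᵢ`. -/
theorem stmt3 (m : ℕ) (N : Fin m → ℕ) (hN : ∀ i, 2 ≤ N i)
    (hmono : ∀ i j : Fin m, i ≤ j → N j ≤ N i) (s : ℕ) (hs : 1 < s)
    (hnp : ¬ s.Prime) (hsq : IsSquare s) :
    Nat.card {i : Fin m // s ≤ N i} +
      Nat.card {i : Fin m // s ≤ N i} * (Nat.card {i : Fin m // s ≤ N i} - 1) / 2 ≤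
    Nat.card {d : Fin m → ℕ // (∀ i, 1 ≤ d i ∧ d i ≤ N i) ∧ ∏ i, d i = s} := by
  obtain ⟨t, ht⟩ := hsq
  have hs2 : 2 ≤ s := hs
  have ht2 : 2 ≤ t := by nlinarith
  have hts : t ≤ s := by nlinarith
  -- the target subtype is finite
  have hfin : Finite {d : Fin m → ℕ // (∀ i, 1 ≤ d i ∧ d i ≤ N i) ∧ ∏ i, d i = s} := by
    have hsub : {d : Fin m → ℕ | (∀ i, 1 ≤ d i ∧ d i ≤ N i) ∧ ∏ i, d i = s} ⊆
        Set.pi Set.univ (fun i => Set.Iic (N i)) := by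
      intro d hd i _
      exact (hd.1 i).2
    exact ((Set.Finite.pi (fun i => Set.finite_Iic (N i))).subset hsub).to_subtype
  set Sm := {i : Fin m // s ≤ N i} with hSm
  -- properties of the tuples
  have hbd : ∀ i j : Sm, ∀ k, 1 ≤ ddAux s t i.1 j.1 k ∧ ddAux s t i.1 j.1 k ≤ N k := by
    intro i j k
    simp only [ddAux]
    split
    · next h =>
      split
      · exact ⟨by omega, h ▸ i.2⟩
      · exact ⟨by omega, h ▸ le_trans hts i.2⟩
    · split
      · next h => exact ⟨by omega, h ▸ le_trans hts j.2⟩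
      · exact ⟨le_refl 1, le_trans one_le_two (hN k)⟩
  have hpr : ∀ i j : Sm, ∏ k, ddAux s t i.1 j.1 k = s := by
    intro i j
    by_cases hij' : i.1 = j.1
    · have heq : ddAux s t i.1 j.1 = fun k => if k = i.1 then s else 1 := by
        funext k
        simp only [ddAux, hij']
        split <;> simp_all
      rw [heq, Finset.prod_ite_eq' Finset.univ i.1 (fun _ => s)]
      simp
    · have hji : ¬ (j.1 = i.1) := fun h => hij' h.symm
      have h1 : ∏ k, ddAux s t i.1 j.1 k =
          ∏ k ∈ ({i.1, j.1} : Finset (Fin m)), ddAux s t i.1 j.1 k := by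
        refine (Finset.prod_subset (Finset.subset_univ _) ?_).symm
        intro x _ hx
        simp only [Finset.mem_insert, Finset.mem_singleton, not_or] at hx
        simp [ddAux, hx.1, hx.2]
      rw [h1, Finset.prod_pair hij']
      simp [ddAux, hji]
      exact ht.symm
  have hle := Nat.card_le_card_of_injective
    (α := {p : Sm × Sm // p.1 ≤ p.2})
    (fun p => (⟨ddAux s t p.1.1.1 p.1.2.1, hbd p.1.1 p.1.2, hpr p.1.1 p.1.2⟩ :
      {d : Fin m → ℕ // (∀ i, 1 ≤ d i ∧ d i ≤ N i) ∧ ∏ i, d i = s}))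
    (by
      rintro ⟨⟨i, j⟩, hij⟩ ⟨⟨k, l⟩, hkl⟩ heq
      simp only [Subtype.mk.injEq] at heq
      obtain ⟨h1, h2⟩ := ddAux_inj s t hs2 ht2 i.1 j.1 k.1 l.1 hij hkl heq
      simp only [Subtype.mk.injEq, Prod.mk.injEq]
      exact ⟨Subtype.ext h1, Subtype.ext h2⟩)
  have hcard : Nat.card {p : Sm × Sm // p.1 ≤ p.2} =
      Nat.card Sm + Nat.card Sm * (Nat.card Sm - 1) / 2 := by
    rw [Nat.card_congr (Sym2.sortEquiv (α := Sm)).symm]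
    rw [Nat.card_eq_fintype_card, Nat.card_eq_fintype_card, Sym2.card]
    rw [Nat.choose_succ_succ, Nat.choose_one_right, Nat.choose_two_right]
  rw [hcard] at hle
  exact hle
end

section
/- Let s and positive integers N₁ ≥ N₂ ≥ ⋯ ≥ Nₘ ≥ 2 be given, and let τ(s) be the number of tuples (d₁,…,dₘ) with 1 ≤ dᵢ ≤ Nᵢ and ∏ dᵢ = s. Suppose s > 1 is composite and not a perfect square, and let K be the number of indices i with s ≤ Nᵢ. Then τ(s) ≥ K². -/
/-- if `s > 1` is composite and not a perfect square then `τ(s) ≥ K²`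
where `K` is the number of indices with `s ≤ Nᵢ`. -/
theorem stmt4 (m : ℕ) (N : Fin m → ℕ) (hN : ∀ i, 2 ≤ N i)
    (hmono : ∀ i j : Fin m, i ≤ j → N j ≤ N i) (s : ℕ) (hs : 1 < s)
    (hnp : ¬ s.Prime) (hsq : ¬ IsSquare s) :
    Nat.card {i : Fin m // s ≤ N i} ^ 2 ≤
    Nat.card {d : Fin m → ℕ // (∀ i, 1 ≤ d i ∧ d i ≤ N i) ∧ ∏ i, d i = s} := by
  have hs0 : 0 < s := by omega
  have hpp : (s.minFac).Prime := Nat.minFac_prime (by omega)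
  set p := s.minFac with hpdef
  obtain ⟨b, hb⟩ := Nat.minFac_dvd s
  have hp1 : 1 < p := hpp.one_lt
  have hb0 : b ≠ 0 := by rintro rfl; simp at hb; omega
  have hb1 : 1 < b := by
    rcases Nat.lt_or_ge b 2 with h | h
    · have hbb : b = 1 := by omega
      subst hbb
      rw [mul_one] at hb
      exact absurd (hb ▸ hpp) hnp
    · omega
  have hpb : p ≠ b := fun h => hsq ⟨p, by rw [hb, ← hpdef, h]⟩
  have hps : p < s := by rw [hb]; nlinarith
  have hbs : b < s := by rw [hb]; nlinarith
  haveI : Finite {d : Fin m → ℕ // (∀ i, 1 ≤ d i ∧ d i ≤ N i) ∧ ∏ i, d i = s} := by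
    have key : ∀ (d : {d : Fin m → ℕ // (∀ i, 1 ≤ d i ∧ d i ≤ N i) ∧ ∏ i, d i = s})
        (i : Fin m), d.1 i < s + 1 := by
      rintro ⟨d, hd1, hd2⟩ i
      have hdvd : d i ∣ s := by
        rw [← hd2]; exact Finset.dvd_prod_of_mem d (Finset.mem_univ i)
      have := Nat.le_of_dvd hs0 hdvd
      show d i < s + 1
      omega
    exact Finite.of_injective (fun d => (fun i => (⟨d.1 i, key d i⟩ : Fin (s + 1))))
      (by intro d e h; ext i; exact congrArg Fin.val (congrFun h i))
  rw [pow_two, ← Nat.card_prod]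
  refine Nat.card_le_card_of_injective
    (fun x => ⟨fun k => if x.1.1 = x.2.1 then (if k = x.1.1 then s else 1)
              else if k = x.1.1 then p else if k = x.2.1 then b else 1, ?_, ?_⟩) ?_
  · obtain ⟨⟨i, hi⟩, ⟨j, hj⟩⟩ := x
    intro k
    simp only
    have h2 := hN k
    split_ifs with ha hb' hc hd
    · subst hb'; exact ⟨by omega, hi⟩
    · omega
    · subst hc; exact ⟨by omega, le_trans (le_of_lt hps) hi⟩
    · subst hd; exact ⟨by omega, le_trans (le_of_lt hbs) hj⟩
    · omega
  · obtain ⟨⟨i, hi⟩, ⟨j, hj⟩⟩ := x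
    simp only
    by_cases hij : i = j
    · subst hij
      simp [Finset.prod_ite_eq']
    · simp only [if_neg hij]
      rw [← Finset.mul_prod_erase Finset.univ _ (Finset.mem_univ i),
          ← Finset.mul_prod_erase _ _
            (Finset.mem_erase.mpr ⟨fun h => hij h.symm, Finset.mem_univ j⟩)]
      rw [if_pos rfl, if_neg (fun h => hij h.symm), if_pos rfl]
      rw [Finset.prod_eq_one]
      · rw [hb]; ring
      · intro k hk
        simp only [Finset.mem_erase] at hk
        rw [if_neg hk.2.1, if_neg hk.1]
  · rintro ⟨⟨i, hi⟩, ⟨j, hj⟩⟩ ⟨⟨i', hi'⟩, ⟨j', hj'⟩⟩ h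
    have h' : ∀ k : Fin m,
        (if i = j then (if k = i then s else 1)
          else if k = i then p else if k = j then b else 1) =
        (if i' = j' then (if k = i' then s else 1)
          else if k = i' then p else if k = j' then b else 1) := by
      intro k
      have := congrFun (congrArg Subtype.val h) k
      simpa using this
    simp only [Prod.mk.injEq, Subtype.mk.injEq]
    by_cases hij : i = j <;> by_cases hij' : i' = j'
    · subst hij; subst hij'
      have hI := h' i
      rw [if_pos rfl, if_pos rfl, if_pos rfl] at hI
      have hii : i = i' := by
        by_contra hne; rw [if_neg hne] at hI; omega
      exact ⟨hii, hii⟩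
    · have hI := h' i
      rw [if_pos hij, if_pos rfl, if_neg hij'] at hI
      split_ifs at hI <;> omega
    · have hI := h' i'
      rw [if_neg hij, if_pos hij', if_pos rfl] at hI
      split_ifs at hI <;> omega
    · have hii : i = i' := by
        by_contra hne
        have hI := h' i
        rw [if_neg hij, if_neg hij', if_pos rfl, if_neg hne] at hI
        split_ifs at hI <;> omega
      have hjj : j = j' := by
        by_contra hne
        have hJ := h' j
        rw [if_neg hij, if_neg hij', if_neg (fun hh => hij hh.symm),
            if_pos rfl, if_neg hne] at hJ
        split_ifs at hJ <;> omega
      exact ⟨hii, hjj⟩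
end

section
/- With notation as in the Cartesian-product code construction, the minimum Hamming distance of C(L) satisfies d(C(L)) ≥ min{σ(X^a) : X^a ∈ L}, where σ(X^a) = ∏_{j=1}^m (p^{rⱼ} − aⱼ). Moreover, if L is downward closed (X^a ∈ L and bⱼ ≤ aⱼ for all j implies X^b ∈ L), then equality holds. -/
/-- The evaluation vector over `S = ∏_j A_j` of the monomial with exponent vector `a`. -/
def evalVec {F : Type*} [Field F] {m : ℕ} (A : Fin m → Subfield F) (a : Fin m → ℕ) :
    {α : Fin m → F // ∀ j, α j ∈ A j} → F :=
  fun α => ∏ j, (α.1 j) ^ (a j)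

/-- The Hamming weight of a word. -/
noncomputable def wt {S F : Type*} [Zero F] (c : S → F) : ℕ := Nat.card {s : S // c s ≠ 0}

/-- The minimum Hamming weight of a nonzero word of a code `C`. -/
noncomputable def dMin {S F : Type*} [Zero F] (C : Set (S → F)) : ℕ :=
  sInf {w : ℕ | ∃ c ∈ C, c ≠ 0 ∧ wt c = w}

open scoped Classical

open Finset MvPolynomial in
private lemma count_cons' {F : Type*} [Field F] (m : ℕ) (A : Fin (m+1) → Finset F)
    (P : (Fin (m+1) → F) → Prop) [DecidablePred P] :
    ((Fintype.piFinset A).filter fun α => P α).card =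
      ∑ β ∈ Fintype.piFinset (fun j => A j.succ),
        ((A 0).filter fun x => P (Fin.cons x β)).card := by
  classical
  rw [← Finset.card_sigma]
  apply Finset.card_bij' (i := fun α _ => (⟨Fin.tail α, α 0⟩ : Σ _ : Fin m → F, F))
    (j := fun q _ => Fin.cons q.2 q.1)
  case hi =>
    intro α hα
    rcases Finset.mem_filter.mp hα with ⟨h1, h2⟩
    rw [Fintype.mem_piFinset] at h1
    refine Finset.mem_sigma.mpr ⟨?_, ?_⟩
    · exact Fintype.mem_piFinset.mpr fun j => h1 j.succ
    · refine Finset.mem_filter.mpr ⟨h1 0, ?_⟩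
      rwa [Fin.cons_self_tail]
  case hj =>
    intro q hq
    rcases Finset.mem_sigma.mp hq with ⟨h1, h2⟩
    rcases Finset.mem_filter.mp h2 with ⟨h3, h4⟩
    refine Finset.mem_filter.mpr ⟨?_, h4⟩
    rw [Fintype.mem_piFinset] at h1 ⊢
    intro j
    refine Fin.cases ?_ ?_ j
    · simpa using h3
    · intro k; simpa using h1 k
  case left_inv => intro α hα; simp [Fin.cons_self_tail]
  case right_inv => intro q hq; simp [Fin.tail_cons]

open Finset MvPolynomial in
private lemma footprint' {F : Type*} [Field F] :
    ∀ (m : ℕ) (A : Fin m → Finset F) (f : MvPolynomial (Fin m) F), f ≠ 0 →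
    ∃ a ∈ f.support,
      ∏ j, ((A j).card - a j) ≤
        ((Fintype.piFinset A).filter fun α => MvPolynomial.eval α f ≠ 0).card := by
  classical
  intro m
  induction m with
  | zero =>
    intro A f hf
    obtain ⟨a, ha⟩ := MvPolynomial.support_nonempty.mpr hf
    refine ⟨a, ha, ?_⟩
    simp only [Finset.univ_eq_empty, Finset.prod_empty]
    have hmem : (fun i : Fin 0 => (i.elim0 : F)) ∈ Fintype.piFinset A :=
      Fintype.mem_piFinset.mpr fun j => j.elim0
    have hev : MvPolynomial.eval (fun i : Fin 0 => (i.elim0 : F)) f ≠ 0 := by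
      intro h0
      apply hf
      have hinj := (MvPolynomial.isEmptyAlgEquiv F (Fin 0)).injective
      apply hinj
      rw [map_zero]
      rw [← h0]
      have key : f = MvPolynomial.C (MvPolynomial.isEmptyAlgEquiv F (Fin 0) f) := by
        rw [← MvPolynomial.isEmptyAlgEquiv_symm_apply, AlgEquiv.symm_apply_apply]
      conv_rhs => rw [key]
      rw [MvPolynomial.eval_C]
    exact Finset.card_pos.mpr ⟨_, Finset.mem_filter.mpr ⟨hmem, hev⟩⟩
  | succ m ih =>
    intro A f hf
    set g := MvPolynomial.finSuccEquiv F m f with hgdef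
    have hg : g ≠ 0 := by
      intro h0
      apply hf
      have := congrArg (MvPolynomial.finSuccEquiv F m).symm h0
      simpa [hgdef] using this
    have hgl : g.leadingCoeff ≠ 0 := Polynomial.leadingCoeff_ne_zero.mpr hg
    obtain ⟨b, hb, hcount⟩ := ih (fun j => A j.succ) g.leadingCoeff hgl
    refine ⟨Finsupp.cons g.natDegree b, ?_, ?_⟩
    · rw [← MvPolynomial.mem_support_coeff_finSuccEquiv]
      exact hb
    · rw [count_cons']
      have hterm : ∀ β ∈ (Fintype.piFinset fun j => A j.succ).filter
          (fun β => MvPolynomial.eval β g.leadingCoeff ≠ 0),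
          (A 0).card - g.natDegree ≤
            ((A 0).filter fun x => MvPolynomial.eval (Fin.cons x β) f ≠ 0).card := by
        intro β hβ
        have hβ2 := (Finset.mem_filter.mp hβ).2
        set h : Polynomial F := g.map (MvPolynomial.eval β) with hh
        have hcoeff : h.coeff g.natDegree ≠ 0 := by
          simpa [hh, Polynomial.coeff_map] using hβ2
        have hne : h ≠ 0 := fun h0 => hcoeff (by simp [h0])
        have hdeg : h.natDegree ≤ g.natDegree := Polynomial.natDegree_map_le
        have hzeros : ((A 0).filter fun x => Polynomial.eval x h = 0).card ≤ g.natDegree := by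
          refine le_trans ?_ (le_trans (Polynomial.card_roots' h) hdeg)
          refine le_trans (Finset.card_le_card ?_) h.roots.toFinset_card_le
          intro x hx
          rcases Finset.mem_filter.mp hx with ⟨-, hx0⟩
          exact Multiset.mem_toFinset.mpr ((Polynomial.mem_roots').mpr ⟨hne, hx0⟩)
        have hsplit := Finset.card_filter_add_card_filter_not
          (s := A 0) (p := fun x => Polynomial.eval x h = 0)
        have hstep : (A 0).card - g.natDegree ≤
            ((A 0).filter fun x => ¬ Polynomial.eval x h = 0).card := by omega
        refine le_trans hstep (le_of_eq ?_)
        refine congrArg Finset.card (Finset.filter_congr ?_)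
        intro x _
        rw [MvPolynomial.eval_eq_eval_mv_eval']
      calc ∏ j, ((A j).card - (Finsupp.cons g.natDegree b) j)
          = ((A 0).card - g.natDegree) * ∏ j : Fin m, ((A j.succ).card - b j) := by
            rw [Fin.prod_univ_succ]
            simp [Finsupp.cons_zero, Finsupp.cons_succ]
        _ ≤ ((A 0).card - g.natDegree) *
              ((Fintype.piFinset fun j => A j.succ).filter
                (fun β => MvPolynomial.eval β g.leadingCoeff ≠ 0)).card :=
            Nat.mul_le_mul_left _ hcount
        _ = ∑ _β ∈ (Fintype.piFinset fun j => A j.succ).filter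
              (fun β => MvPolynomial.eval β g.leadingCoeff ≠ 0),
              ((A 0).card - g.natDegree) := by
            rw [Finset.sum_const, smul_eq_mul, mul_comm]
        _ ≤ ∑ β ∈ (Fintype.piFinset fun j => A j.succ).filter
              (fun β => MvPolynomial.eval β g.leadingCoeff ≠ 0),
              ((A 0).filter fun x => MvPolynomial.eval (Fin.cons x β) f ≠ 0).card :=
            Finset.sum_le_sum hterm
        _ ≤ ∑ β ∈ Fintype.piFinset fun j => A j.succ,
              ((A 0).filter fun x => MvPolynomial.eval (Fin.cons x β) f ≠ 0).card :=
            Finset.sum_le_sum_of_subset (Finset.filter_subset _ _)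

open MvPolynomial in
private lemma repr_poly' {F : Type*} [Field F] {m : ℕ} (A : Fin m → Subfield F)
    (L : Set (Fin m → ℕ)) (c : {α : Fin m → F // ∀ j, α j ∈ A j} → F)
    (hc : c ∈ Submodule.span F (evalVec A '' L)) :
    ∃ P : MvPolynomial (Fin m) F, (∀ d ∈ P.support, ⇑d ∈ L) ∧
      ∀ α : {α : Fin m → F // ∀ j, α j ∈ A j}, c α = MvPolynomial.eval α.1 P := by
  rw [Submodule.mem_span_set'] at hc
  obtain ⟨n, w, g, hsum⟩ := hc
  choose a haL hag using fun i => (g i).2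
  refine ⟨∑ i, MvPolynomial.monomial (Finsupp.equivFunOnFinite.symm (a i)) (w i), ?_, ?_⟩
  · intro d hd
    obtain ⟨i, -, hi⟩ := Finset.mem_biUnion.mp (MvPolynomial.support_sum hd)
    have hsing := MvPolynomial.support_monomial_subset hi
    rw [Finset.mem_singleton] at hsing
    subst hsing
    simpa using haL i
  · intro α
    rw [← hsum]
    simp only [Finset.sum_apply, Pi.smul_apply, smul_eq_mul, map_sum]
    refine Finset.sum_congr rfl fun i _ => ?_
    rw [← hag i, MvPolynomial.eval_monomial]
    unfold evalVec
    congr 1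
    rw [Finsupp.prod_fintype]
    · simp
    · intro j; exact pow_zero _

private lemma wt_eq' {F : Type*} [Field F] [Fintype F] {m : ℕ} (A : Fin m → Subfield F)
    (cf : (Fin m → F) → F) :
    wt (fun s : {α : Fin m → F // ∀ j, α j ∈ A j} => cf s.1) =
      ((Fintype.piFinset fun j => Finset.univ.filter (· ∈ A j)).filter
        fun α => cf α ≠ 0).card := by
  rw [wt, Nat.card_eq_fintype_card, ← Fintype.card_coe]
  exact Fintype.card_congr
    { toFun := fun x => ⟨x.1.1, Finset.mem_filter.mpr
        ⟨Fintype.mem_piFinset.mpr fun j =>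
          Finset.mem_filter.mpr ⟨Finset.mem_univ _, x.1.2 j⟩, x.2⟩⟩
      invFun := fun y => ⟨⟨y.1, fun j =>
        (Finset.mem_filter.mp
          (Fintype.mem_piFinset.mp (Finset.mem_filter.mp y.2).1 j)).2⟩,
        (Finset.mem_filter.mp y.2).2⟩
      left_inv := fun x => rfl
      right_inv := fun y => rfl }

/-- `d(C(L)) ≥ min{σ(X^a) : X^a ∈ L}`, with equality when `L`
is downward closed. -/
theorem stmt12 (p rr m : ℕ) (hp : p.Prime) (r : Fin m → ℕ) (hr : ∀ j, 0 < r j)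
    (hdvd : ∀ j, r j ∣ rr) (F : Type*) [Field F] [Fintype F]
    (hF : Fintype.card F = p ^ rr)
    (A : Fin m → Subfield F) (hA : ∀ j, Nat.card (A j) = p ^ r j)
    (L : Set (Fin m → ℕ)) (hL : ∀ a ∈ L, ∀ j, a j < p ^ r j) (hLne : L.Nonempty) :
    sInf {δ : ℕ | ∃ a ∈ L, ∏ j, (p ^ r j - a j) = δ} ≤
      dMin ((Submodule.span F (evalVec A '' L) :
        Submodule F ({α : Fin m → F // ∀ j, α j ∈ A j} → F)) :
        Set ({α : Fin m → F // ∀ j, α j ∈ A j} → F)) ∧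
    ((∀ a ∈ L, ∀ b : Fin m → ℕ, (∀ j, b j ≤ a j) → b ∈ L) →
      dMin ((Submodule.span F (evalVec A '' L) :
        Submodule F ({α : Fin m → F // ∀ j, α j ∈ A j} → F)) :
        Set ({α : Fin m → F // ∀ j, α j ∈ A j} → F)) =
        sInf {δ : ℕ | ∃ a ∈ L, ∏ j, (p ^ r j - a j) = δ}) := by
  have hAFcard : ∀ j, (Finset.univ.filter (· ∈ A j)).card = p ^ r j := by
    intro j
    rw [← Fintype.card_subtype, ← Nat.card_eq_fintype_card]
    exact hA j
  obtain ⟨a₀, ha₀⟩ := hLne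
  set W := {w : ℕ | ∃ c ∈ ((Submodule.span F (evalVec A '' L) :
      Submodule F ({α : Fin m → F // ∀ j, α j ∈ A j} → F)) :
      Set ({α : Fin m → F // ∀ j, α j ∈ A j} → F)), c ≠ 0 ∧ wt c = w} with hW
  have hdMin : dMin ((Submodule.span F (evalVec A '' L) :
      Submodule F ({α : Fin m → F // ∀ j, α j ∈ A j} → F)) :
      Set ({α : Fin m → F // ∀ j, α j ∈ A j} → F)) = sInf W := rfl
  have hc₀mem : evalVec A a₀ ∈ (Submodule.span F (evalVec A '' L) :
      Submodule F ({α : Fin m → F // ∀ j, α j ∈ A j} → F)) :=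
    Submodule.subset_span ⟨a₀, ha₀, rfl⟩
  have hc₀ne : evalVec A a₀ ≠ 0 := by
    intro h0
    have h1 := congrFun h0 ⟨fun _ => 1, fun j => one_mem _⟩
    simp [evalVec] at h1
  have hWne : W.Nonempty := ⟨wt (evalVec A a₀), evalVec A a₀, hc₀mem, hc₀ne, rfl⟩
  obtain ⟨c, hcC, hcne, hwtc⟩ := Nat.sInf_mem hWne
  obtain ⟨P, hPsupp, hPeval⟩ := repr_poly' A L c hcC
  have hPne : P ≠ 0 := by
    intro h0
    apply hcne
    funext s
    rw [hPeval s, h0, map_zero]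
    rfl
  obtain ⟨d, hd', hcount⟩ := footprint' m (fun j => Finset.univ.filter (· ∈ A j)) P hPne
  have hdL : ⇑d ∈ L := hPsupp d hd'
  have hwt2 : wt c = ((Fintype.piFinset fun j => Finset.univ.filter (· ∈ A j)).filter
      fun α => MvPolynomial.eval α P ≠ 0).card := by
    have hc' : c = fun s : {α : Fin m → F // ∀ j, α j ∈ A j} =>
        MvPolynomial.eval s.1 P := funext hPeval
    rw [hc']
    exact wt_eq' A fun α => MvPolynomial.eval α P
  have hlow : sInf {δ : ℕ | ∃ a ∈ L, ∏ j, (p ^ r j - a j) = δ} ≤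
      dMin ((Submodule.span F (evalVec A '' L) :
        Submodule F ({α : Fin m → F // ∀ j, α j ∈ A j} → F)) :
        Set ({α : Fin m → F // ∀ j, α j ∈ A j} → F)) := by
    rw [hdMin, ← hwtc]
    calc sInf {δ : ℕ | ∃ a ∈ L, ∏ j, (p ^ r j - a j) = δ}
        ≤ ∏ j, (p ^ r j - d j) := Nat.sInf_le ⟨⇑d, hdL, rfl⟩
      _ = ∏ j, ((Finset.univ.filter (· ∈ A j)).card - d j) := by
          exact Finset.prod_congr rfl fun j _ => by rw [hAFcard j]
      _ ≤ _ := by rw [hwt2]; exact hcount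
  refine ⟨hlow, fun hDC => ?_⟩
  have hσne : {δ : ℕ | ∃ a ∈ L, ∏ j, (p ^ r j - a j) = δ}.Nonempty :=
    ⟨_, a₀, ha₀, rfl⟩
  obtain ⟨a, haL2, hprod⟩ := Nat.sInf_mem hσne
  choose T hTsub hTcard using fun j => Finset.exists_subset_card_eq
    (show a j ≤ (Finset.univ.filter (· ∈ A j)).card by
      rw [hAFcard j]; exact (hL a haL2 j).le)
  obtain ⟨Q, hQ⟩ : ∃ Q : Fin m → Polynomial F,
      Q = fun j => ∏ t ∈ T j, (Polynomial.X - Polynomial.C t) := ⟨_, rfl⟩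
  have hQdeg : ∀ j, (Q j).natDegree = a j := by
    intro j
    rw [hQ]
    rw [Polynomial.natDegree_prod _ _ (fun t _ => Polynomial.X_sub_C_ne_zero t)]
    simp [Polynomial.natDegree_X_sub_C, hTcard j]
  have hQne : ∀ j x, (Q j).eval x ≠ 0 ↔ x ∉ T j := by
    intro j x
    rw [hQ]
    rw [Polynomial.eval_prod, Finset.prod_ne_zero_iff]
    constructor
    · intro h hx
      have := h x hx
      simp at this
    · intro hx t ht h0
      rw [Polynomial.eval_sub, Polynomial.eval_X, Polynomial.eval_C, sub_eq_zero] at h0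
      exact hx (h0 ▸ ht)
  obtain ⟨cf, hcf⟩ : ∃ cf : (Fin m → F) → F,
      cf = fun α => ∏ j, (Q j).eval (α j) := ⟨_, rfl⟩
  have hmem : (fun s : {α : Fin m → F // ∀ j, α j ∈ A j} => cf s.1) ∈
      (Submodule.span F (evalVec A '' L) :
        Submodule F ({α : Fin m → F // ∀ j, α j ∈ A j} → F)) := by
    have hrep : (fun s : {α : Fin m → F // ∀ j, α j ∈ A j} => cf s.1) =
        ∑ b ∈ Fintype.piFinset (fun j => Finset.range (a j + 1)),
          (∏ j, (Q j).coeff (b j)) • evalVec A b := by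
      funext s
      simp only [Finset.sum_apply, Pi.smul_apply, smul_eq_mul, evalVec, hcf]
      have hev : ∀ j, (Q j).eval (s.1 j) =
          ∑ k ∈ Finset.range (a j + 1), (Q j).coeff k * s.1 j ^ k :=
        by
          intro j
          exact Polynomial.eval_eq_sum_range' (by rw [hQdeg j]; exact Nat.lt_succ_self _) _
      rw [Finset.prod_congr rfl fun j _ => hev j, Finset.prod_univ_sum]
      refine Finset.sum_congr rfl fun b _ => ?_
      rw [Finset.prod_mul_distrib]
    rw [hrep]
    refine Submodule.sum_mem _ fun b hb => ?_
    refine Submodule.smul_mem _ _ (Submodule.subset_span ⟨b, ?_, rfl⟩)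
    refine hDC a haL2 b fun j => ?_
    exact Nat.lt_succ_iff.mp (Finset.mem_range.mp (Fintype.mem_piFinset.mp hb j))
  have hwt3 : wt (fun s : {α : Fin m → F // ∀ j, α j ∈ A j} => cf s.1) =
      ∏ j, (p ^ r j - a j) := by
    rw [wt_eq']
    have hfilter : ((Fintype.piFinset fun j => Finset.univ.filter (· ∈ A j)).filter
        fun α => cf α ≠ 0) =
        Fintype.piFinset (fun j => (Finset.univ.filter (· ∈ A j)) \ T j) := by
      ext α
      simp only [Finset.mem_filter, Fintype.mem_piFinset, Finset.mem_sdiff, hcf]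
      rw [Finset.prod_ne_zero_iff]
      constructor
      · rintro ⟨h1, h2⟩ j
        exact ⟨h1 j, (hQne j (α j)).mp (h2 j (Finset.mem_univ j))⟩
      · intro h
        exact ⟨fun j => (h j).1, fun j _ => (hQne j (α j)).mpr (h j).2⟩
    rw [hfilter, Fintype.card_piFinset]
    refine Finset.prod_congr rfl fun j _ => ?_
    rw [Finset.card_sdiff_of_subset (hTsub j), hTcard j, hAFcard j]
  have hpos : 0 < ∏ j, (p ^ r j - a j) :=
    Finset.prod_pos fun j _ => Nat.sub_pos_of_lt (hL a haL2 j)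
  have hcfne : (fun s : {α : Fin m → F // ∀ j, α j ∈ A j} => cf s.1) ≠ 0 := by
    intro h0
    rw [h0] at hwt3
    have hempty : IsEmpty {s : {α : Fin m → F // ∀ j, α j ∈ A j} //
        (0 : {α : Fin m → F // ∀ j, α j ∈ A j} → F) s ≠ 0} := ⟨fun x => x.2 rfl⟩
    rw [wt, Nat.card_of_isEmpty] at hwt3
    exact hpos.ne' hwt3.symm
  have hup : dMin ((Submodule.span F (evalVec A '' L) :
      Submodule F ({α : Fin m → F // ∀ j, α j ∈ A j} → F)) :
      Set ({α : Fin m → F // ∀ j, α j ∈ A j} → F)) ≤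
      sInf {δ : ℕ | ∃ a ∈ L, ∏ j, (p ^ r j - a j) = δ} := by
    rw [hdMin, ← hprod, ← hwt3]
    exact Nat.sInf_le ⟨_, hmem, hcfne, rfl⟩
  exact le_antisymm hup hlow
end

section
/- Let p be prime, rⱼ ∣ r, q = p^r, and δ ≥ 1. Define L(δ) = {a : 0 ≤ aⱼ < p^{rⱼ}, σ(a) ≥ δ} and L^⊥(δ) = {b : 0 ≤ bⱼ < p^{rⱼ}, μ(b) < δ} where σ(a) = ∏(p^{rⱼ}−aⱼ) and μ(b) = ∏(bⱼ+1). Then the Euclidean dual of the evaluation code C(L(δ)) equals C(L^⊥(δ)). -/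
open scoped Classical

/-- The Euclidean dual of a linear code `C ⊆ F^ι`. -/
def dualCode {F : Type*} [Field F] {ι : Type*} [Fintype ι] (C : Submodule F (ι → F)) :
    Submodule F (ι → F) where
  carrier := {x | ∀ c ∈ C, ∑ i, x i * c i = 0}
  add_mem' := by
    intro a b ha hb c hc
    simp only [Set.mem_setOf_eq] at *
    simp [Pi.add_apply, add_mul, Finset.sum_add_distrib, ha c hc, hb c hc]
  zero_mem' := by
    intro c hc
    simp
  smul_mem' := by
    intro t a ha c hc
    simp only [Set.mem_setOf_eq] at *
    simp [Pi.smul_apply, smul_eq_mul, mul_assoc, ← Finset.mul_sum, ha c hc]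

set_option linter.unusedSectionVars false

set_option synthInstance.maxHeartbeats 1000000 in
lemma subfield_coe_sum {F : Type*} [Field F] (K : Subfield F) {ι : Type*} (s : Finset ι)
    (f : ι → K) : ((∑ x ∈ s, f x : K) : F) = ∑ x ∈ s, (f x : F) := map_sum K.subtype f s

section CharSum
variable {F : Type*} [Field F] [Fintype F]

lemma sumPow_lt (K : Subfield F) (k : ℕ) (h : k < Nat.card K - 1) :
    ∑ x : K, (x : F) ^ k = 0 := by
  have h0 : ∑ x : K, (x : K) ^ k = 0 :=
    FiniteField.sum_pow_lt_card_sub_one _ _ (by rwa [← Nat.card_eq_fintype_card])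
  calc ∑ x : K, (x : F) ^ k = ((∑ x : K, x ^ k : K) : F) := by
        rw [subfield_coe_sum]; norm_cast
    _ = 0 := by rw [h0]; simp

lemma sumPow_card (K : Subfield F) (h2 : 2 ≤ Nat.card K) :
    ∑ x : K, (x : F) ^ (Nat.card K - 1) = -1 := by
  have hq : Nat.card K = Fintype.card K := Nat.card_eq_fintype_card
  rw [hq] at h2 ⊢
  have h0 : ∑ x : K, (x : K) ^ (Fintype.card K - 1) = -1 := by
    have hsplit := Finset.sum_sdiff (f := fun x : K => x ^ (Fintype.card K - 1))
      (Finset.subset_univ ({0} : Finset K))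
    rw [Finset.sum_singleton, zero_pow (by omega)] at hsplit
    have hone : ∑ x ∈ Finset.univ \ ({0} : Finset K), x ^ (Fintype.card K - 1)
        = ∑ x ∈ Finset.univ \ ({0} : Finset K), (1 : K) := by
      refine Finset.sum_congr rfl fun x hx => ?_
      have hx0 : x ≠ 0 := by simpa using (Finset.mem_sdiff.mp hx).2
      exact FiniteField.pow_card_sub_one_eq_one x hx0
    have hcard : (Finset.univ \ ({0} : Finset K)).card = Fintype.card K - 1 := by
      rw [Finset.card_sdiff_of_subset (Finset.subset_univ _), Finset.card_singleton, Finset.card_univ]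
    have hzero : ((Fintype.card K : ℕ) : K) = 0 := FiniteField.cast_card_eq_zero K
    rw [hone, Finset.sum_const, hcard, nsmul_eq_mul, mul_one] at hsplit
    rw [← hsplit]
    push_cast [Nat.cast_sub (by omega : 1 ≤ Fintype.card K)]
    rw [hzero]; ring
  calc ∑ x : K, (x : F) ^ (Fintype.card ↥K - 1)
      = ((∑ x : K, x ^ (Fintype.card ↥K - 1) : K) : F) := by
        rw [subfield_coe_sum]; norm_cast
    _ = -1 := by rw [h0]; simp

end CharSum

section Pair
variable {F : Type*} [Field F] [Fintype F] {m : ℕ} (A : Fin m → Subfield F)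

def prodEquiv : (∀ j, (A j)) ≃ {α : Fin m → F // ∀ j, α j ∈ A j} where
  toFun x := ⟨fun j => x j, fun j => (x j).2⟩
  invFun α j := ⟨α.1 j, α.2 j⟩
  left_inv _ := rfl
  right_inv _ := rfl

lemma pair_eq (a b : Fin m → ℕ) :
    ∑ α : {α : Fin m → F // ∀ j, α j ∈ A j}, evalVec A a α * evalVec A b α
      = ∏ j, ∑ x : (A j), (x : F) ^ (a j + b j) := by
  rw [← Equiv.sum_comp (prodEquiv A)]
  rw [Finset.prod_univ_sum, Fintype.piFinset_univ]
  refine Finset.sum_congr rfl fun x _ => ?_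
  simp only [evalVec, prodEquiv, Equiv.coe_fn_mk, ← Finset.prod_mul_distrib, pow_add]

lemma card_prod : Nat.card {α : Fin m → F // ∀ j, α j ∈ A j} = ∏ j, Nat.card (A j) := by
  rw [← Nat.card_congr (prodEquiv A), Nat.card_pi]

end Pair

section LI
variable {F : Type*} [Field F] [Fintype F] {m : ℕ} (A : Fin m → Subfield F)
  (n : Fin m → ℕ) (hn : ∀ j, Nat.card (A j) = n j) (h2 : ∀ j, 2 ≤ n j)

include hn h2 in
lemma li_eval :
    LinearIndependent F (fun i : (∀ j, Fin (n j)) => evalVec A (fun j => (i j : ℕ))) := by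
  rw [linearIndependent_iff]
  intro l hl
  by_contra hne
  obtain ⟨a, ha, hmax⟩ := Finset.exists_max_image l.support (fun i => ∑ j, (i j : ℕ))
    (Finsupp.support_nonempty_iff.mpr hne)
  set v : {α : Fin m → F // ∀ j, α j ∈ A j} → F :=
    evalVec A (fun j => n j - 1 - (a j : ℕ)) with hv
  have hz : ∀ α, ∑ i ∈ l.support, l i * evalVec A (fun j => ((i j : ℕ))) α = 0 := by
    intro α
    have h1 := congrFun hl α
    rw [Finsupp.linearCombination_apply, Finsupp.sum] at h1
    simpa using h1
  have h0 : ∑ i ∈ l.support,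
      l i * (∑ α, evalVec A (fun j => ((i j : ℕ))) α * v α) = 0 := by
    simp_rw [Finset.mul_sum]
    rw [Finset.sum_comm]
    calc ∑ α, ∑ i ∈ l.support, l i * (evalVec A (fun j => ((i j : ℕ))) α * v α)
        = ∑ α, (∑ i ∈ l.support, l i * evalVec A (fun j => ((i j : ℕ))) α) * v α := by
          refine Finset.sum_congr rfl fun α _ => ?_
          rw [Finset.sum_mul]
          exact Finset.sum_congr rfl fun i _ => (mul_assoc _ _ _).symm
      _ = 0 := by simp [hz]
  have hfac : ∀ i : (∀ j, Fin (n j)), ∀ j,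
      (∑ x : (A j), (x : F) ^ ((i j : ℕ) + (n j - 1 - (a j : ℕ)))) ≠ 0 →
      (a j : ℕ) ≤ (i j : ℕ) := by
    intro i j hne'
    by_contra hlt
    push_neg at hlt
    apply hne'
    apply sumPow_lt
    rw [hn j]
    have := (a j).isLt
    omega
  rw [Finset.sum_eq_single a] at h0
  · rw [pair_eq] at h0
    have hdiag : ∀ j, (∑ x : (A j), (x : F) ^ ((a j : ℕ) + (n j - 1 - (a j : ℕ)))) = -1 := by
      intro j
      have hk : (a j : ℕ) + (n j - 1 - (a j : ℕ)) = Nat.card (A j) - 1 := by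
        rw [hn j]; have := (a j).isLt; have := h2 j; omega
      rw [hk]
      exact sumPow_card _ (by rw [hn j]; exact h2 j)
    rw [Finset.prod_congr rfl (fun j _ => hdiag j), Finset.prod_const, Finset.card_univ,
      Fintype.card_fin] at h0
    have : l a = 0 := by
      rcases mul_eq_zero.mp h0 with h | h
      · exact h
      · exact absurd h (by simp)
    exact (Finsupp.mem_support_iff.mp ha) this
  · intro i hi hne'
    rw [pair_eq]
    have : (∏ j, ∑ x : (A j), (x : F) ^ ((i j : ℕ) + (n j - 1 - (a j : ℕ)))) = 0 := by
      by_contra hP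
      have hge : ∀ j, (a j : ℕ) ≤ (i j : ℕ) := fun j =>
        hfac i j (Finset.prod_ne_zero_iff.mp hP j (Finset.mem_univ j))
      obtain ⟨j0, hj0⟩ : ∃ j0, i j0 ≠ a j0 := by
        by_contra hall; push_neg at hall; exact hne' (funext hall)
      have hstrict : (a j0 : ℕ) < (i j0 : ℕ) := by
        rcases lt_or_eq_of_le (hge j0) with h | h
        · exact h
        · exact absurd (Fin.ext h.symm) hj0
      have hsum : ∑ j, (a j : ℕ) < ∑ j, (i j : ℕ) :=
        Finset.sum_lt_sum (fun j _ => hge j) ⟨j0, Finset.mem_univ j0, hstrict⟩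
      exact absurd (hmax i hi) (by omega)
    rw [this, mul_zero]
  · intro hna; exact absurd ha hna
end LI

section Span
variable {F : Type*} [Field F] [Fintype F] {m : ℕ} (A : Fin m → Subfield F)
  (n : Fin m → ℕ) (hn : ∀ j, Nat.card (A j) = n j) (h2 : ∀ j, 2 ≤ n j)

lemma image_eq_range (P : (Fin m → ℕ) → Prop) :
    evalVec A '' {a | (∀ j, a j < n j) ∧ P a}
      = Set.range (fun i : {i : ∀ j, Fin (n j) // P (fun j => ((i j : ℕ)))} =>
          evalVec A (fun j => ((i.1 j : ℕ)))) := by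
  ext v
  constructor
  · rintro ⟨a, ⟨hbd, hP⟩, rfl⟩
    exact ⟨⟨fun j => ⟨a j, hbd j⟩, hP⟩, rfl⟩
  · rintro ⟨⟨i, hP⟩, rfl⟩
    exact ⟨fun j => ((i j : ℕ)), ⟨fun j => (i j).isLt, hP⟩, rfl⟩

include hn h2 in
lemma finrank_span_eval (P : (Fin m → ℕ) → Prop) :
    Module.finrank F (Submodule.span F (evalVec A '' {a | (∀ j, a j < n j) ∧ P a}))
      = Nat.card {i : ∀ j, Fin (n j) // P (fun j => ((i j : ℕ)))} := by
  rw [image_eq_range]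
  have hli : LinearIndependent F
      (fun i : {i : ∀ j, Fin (n j) // P (fun j => ((i j : ℕ)))} =>
        evalVec A (fun j => ((i.1 j : ℕ)))) :=
    (li_eval A n hn h2).comp Subtype.val Subtype.val_injective
  rw [finrank_span_eq_card hli, Nat.card_eq_fintype_card]

end Span

section Count
lemma count_lemma {m : ℕ} (n : Fin m → ℕ) (δ : ℕ) :
    Nat.card {i : ∀ j, Fin (n j) // δ ≤ ∏ j, (n j - (i j : ℕ))}
      + Nat.card {i : ∀ j, Fin (n j) // (∏ j, ((i j : ℕ) + 1)) < δ}
      = ∏ j, n j := by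
  have hrev : ∀ i : ∀ j, Fin (n j), ∏ j, (((i j).rev : ℕ) + 1) = ∏ j, (n j - (i j : ℕ)) := by
    intro i
    refine Finset.prod_congr rfl fun j _ => ?_
    have h1 : ((i j).rev : ℕ) = n j - ((i j : ℕ) + 1) := Fin.val_rev _
    have h2 := (i j).isLt
    omega
  have e : {i : ∀ j, Fin (n j) // ¬ (δ ≤ ∏ j, (n j - (i j : ℕ)))}
      ≃ {i : ∀ j, Fin (n j) // (∏ j, ((i j : ℕ) + 1)) < δ} := by
    refine Equiv.subtypeEquiv (Equiv.piCongrRight fun j => Fin.revPerm) ?_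
    intro i
    simp only [not_le, Equiv.piCongrRight_apply, Fin.revPerm_apply, Pi.map_apply]
    rw [hrev i]
  have hcompl : Nat.card {i : ∀ j, Fin (n j) // ¬ (δ ≤ ∏ j, (n j - (i j : ℕ)))}
      = Fintype.card (∀ j, Fin (n j))
        - Nat.card {i : ∀ j, Fin (n j) // δ ≤ ∏ j, (n j - (i j : ℕ))} := by
    rw [Nat.card_eq_fintype_card, Nat.card_eq_fintype_card, Fintype.card_subtype_compl]
  have hle : Nat.card {i : ∀ j, Fin (n j) // δ ≤ ∏ j, (n j - (i j : ℕ))}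
      ≤ Fintype.card (∀ j, Fin (n j)) := by
    rw [Nat.card_eq_fintype_card]; exact Fintype.card_subtype_le _
  have hcard : Fintype.card (∀ j, Fin (n j)) = ∏ j, n j := by
    simp [Fintype.card_pi]
  rw [← hcard, ← Nat.card_congr e, hcompl]
  exact Nat.add_sub_cancel' hle
end Count

section Dual
variable {F : Type*} [Field F] {ι : Type*} [Fintype ι]

lemma mem_dualCode {C : Submodule F (ι → F)} {x : ι → F} :
    x ∈ dualCode C ↔ ∀ c ∈ C, ∑ i, x i * c i = 0 := Iff.rfl

noncomputable def dotForm : LinearMap.BilinForm F (ι → F) :=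
  LinearMap.mk₂ F (fun x y => ∑ i, x i * y i)
    (fun x x' y => by simp [add_mul, Finset.sum_add_distrib])
    (fun t x y => by simp [Finset.mul_sum, mul_assoc])
    (fun x y y' => by simp [mul_add, Finset.sum_add_distrib])
    (fun t x y => by simp [Finset.mul_sum, mul_left_comm])

lemma dotForm_apply (x y : ι → F) : dotForm x y = ∑ i, x i * y i := rfl

lemma dualCode_eq_orthogonal (C : Submodule F (ι → F)) :
    dualCode C = dotForm.orthogonal C := by
  ext x
  rw [mem_dualCode, LinearMap.BilinForm.mem_orthogonal_iff]
  refine forall_congr' fun c => forall_congr' fun _ => ?_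
  rw [dotForm_apply]
  constructor <;> intro h <;> rw [← h] <;> exact Finset.sum_congr rfl fun i _ => mul_comm _ _

lemma finrank_dualCode (C : Submodule F (ι → F)) :
    Module.finrank F (dualCode C) = Fintype.card ι - Module.finrank F C := by
  rw [dualCode_eq_orthogonal]
  have hnd : (dotForm : LinearMap.BilinForm F (ι → F)).Nondegenerate := by
    constructor <;> intro x hx <;> funext i <;> have := hx (Pi.single i 1) <;>
    rw [dotForm_apply] at this <;>
    simpa [Pi.single_apply, Finset.sum_ite_eq'] using this
  have hrefl : (dotForm : LinearMap.BilinForm F (ι → F)).IsRefl := by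
    intro x y h
    rw [dotForm_apply] at h ⊢
    rw [← h]
    exact Finset.sum_congr rfl fun i _ => mul_comm _ _
  rw [LinearMap.BilinForm.finrank_orthogonal hnd,
    Module.finrank_fintype_fun_eq_card]

end Dual

/-- the Euclidean dual of the improved code `C(L(δ))` is `C(L^⊥(δ))`,
where `L(δ) = {a : σ(a) ≥ δ}` and `L^⊥(δ) = {b : μ(b) < δ}`. -/
theorem stmt14 (p rr m : ℕ) (hp : p.Prime) (r : Fin m → ℕ) (hr : ∀ j, 0 < r j)
    (hdvd : ∀ j, r j ∣ rr) (F : Type*) [Field F] [Fintype F]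
    (hF : Fintype.card F = p ^ rr)
    (A : Fin m → Subfield F) (hA : ∀ j, Nat.card (A j) = p ^ r j)
    (δ : ℕ) (hδ : 1 ≤ δ) :
    dualCode (Submodule.span F (evalVec A ''
        {a : Fin m → ℕ | (∀ j, a j < p ^ r j) ∧ δ ≤ ∏ j, (p ^ r j - a j)})) =
      Submodule.span F (evalVec A ''
        {b : Fin m → ℕ | (∀ j, b j < p ^ r j) ∧ ∏ j, (b j + 1) < δ}) := by
  have h2 : ∀ j, 2 ≤ p ^ r j := fun j =>
    Nat.one_lt_pow (hr j).ne' hp.one_lt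
  set C1 : Submodule F _ := Submodule.span F (evalVec A ''
      {a : Fin m → ℕ | (∀ j, a j < p ^ r j) ∧ δ ≤ ∏ j, (p ^ r j - a j)}) with hC1def
  set C2 : Submodule F _ := Submodule.span F (evalVec A ''
      {b : Fin m → ℕ | (∀ j, b j < p ^ r j) ∧ ∏ j, (b j + 1) < δ}) with hC2def
  -- containment
  have hle : C2 ≤ dualCode C1 := by
    rw [hC2def, Submodule.span_le]
    rintro _ ⟨b, ⟨hb1, hb2⟩, rfl⟩
    rw [SetLike.mem_coe, mem_dualCode]
    intro c hc
    induction hc using Submodule.span_induction with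
    | mem x hx =>
        obtain ⟨a, ⟨ha1, ha2⟩, rfl⟩ := hx
        rw [pair_eq]
        by_contra hP
        have hge : ∀ j, p ^ r j - a j ≤ b j + 1 := by
          intro j
          have hfac := Finset.prod_ne_zero_iff.mp hP j (Finset.mem_univ j)
          by_contra hlt
          push_neg at hlt
          exact hfac (sumPow_lt (A j) _ (by rw [hA j]; omega))
        have hprod : δ ≤ ∏ j, (b j + 1) :=
          le_trans ha2 (Finset.prod_le_prod' fun j _ => hge j)
        omega
    | zero => simp
    | add x y _ _ hx hy => simp [mul_add, Finset.sum_add_distrib, hx, hy]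
    | smul t x _ hx => simp [mul_left_comm, ← Finset.mul_sum, hx]
  -- dimension computations
  have hC1rank : Module.finrank F C1
      = Nat.card {i : ∀ j, Fin (p ^ r j) // δ ≤ ∏ j, (p ^ r j - ((i j : ℕ)))} :=
    finrank_span_eval A (fun j => p ^ r j) hA h2 (fun a => δ ≤ ∏ j, (p ^ r j - a j))
  have hC2rank : Module.finrank F C2
      = Nat.card {i : ∀ j, Fin (p ^ r j) // (∏ j, ((i j : ℕ) + 1)) < δ} :=
    finrank_span_eval A (fun j => p ^ r j) hA h2 (fun b => (∏ j, (b j + 1)) < δ)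
  have hcount := count_lemma (fun j => p ^ r j) δ
  have hcardS : Fintype.card {α : Fin m → F // ∀ j, α j ∈ A j} = ∏ j, p ^ r j := by
    rw [← Nat.card_eq_fintype_card, card_prod]
    exact Finset.prod_congr rfl fun j _ => hA j
  have hdual : Module.finrank F (dualCode C1)
      = ∏ j, p ^ r j - Module.finrank F C1 := by
    rw [finrank_dualCode, hcardS]
  have hfr : Module.finrank F (dualCode C1) = Module.finrank F C2 := by
    rw [hdual, hC1rank, hC2rank]
    refine Nat.sub_eq_of_eq_add ?_
    rw [← hcount, Nat.add_comm]
  exact (Submodule.eq_of_le_of_finrank_le hle hfr.le).symm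
end

section
/- Let p be prime, r₁ ≥ r₂ ≥ ⋯ ≥ rₘ positive integers, and 2 < δ ≤ p^{r₂} + 1. Let K be the largest index with δ − 1 ≤ p^{r_K}. Then the number of exponent vectors a (with 0 ≤ aⱼ < p^{rⱼ}) satisfying σ(a) = δ − 1 is at least K, and K ≥ 2. Consequently |L(δ−1)| ≥ |L(δ)| + K where L(δ) = {a : σ(a) ≥ δ}. -/
/-- Witness vector used in the proof of `stmt17`. -/
def stmt17w (p δ : ℕ) {m : ℕ} (r : Fin m → ℕ) (i : Fin m) : Fin m → ℕ :=
  Function.update (fun j => p ^ r j - 1) i (p ^ r i - (δ - 1))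

/-- with `r₁ ≥ r₂ ≥ ⋯ ≥ rₘ` and `2 < δ ≤ p^{r₂} + 1`, letting `K` be the
number of indices with `δ - 1 ≤ p^{r_K}`, one has `K ≥ 2`, the number of admissible
exponent vectors with `σ`-value `δ - 1` is at least `K`, and `|L(δ-1)| ≥ |L(δ)| + K`. -/
theorem stmt17 (p m : ℕ) (hp : p.Prime) (hm : 2 ≤ m) (r : Fin m → ℕ)
    (hr : ∀ j, 0 < r j) (hmono : ∀ i j : Fin m, i ≤ j → r j ≤ r i)
    (δ : ℕ) (hδ : 2 < δ) (hδ2 : δ ≤ p ^ r ⟨1, hm⟩ + 1) :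
    2 ≤ Nat.card {i : Fin m // δ - 1 ≤ p ^ r i} ∧
    Nat.card {i : Fin m // δ - 1 ≤ p ^ r i} ≤
      Nat.card {a : Fin m → ℕ // (∀ j, a j < p ^ r j) ∧ ∏ j, (p ^ r j - a j) = δ - 1} ∧
    Nat.card {a : Fin m → ℕ // (∀ j, a j < p ^ r j) ∧ δ ≤ ∏ j, (p ^ r j - a j)} +
        Nat.card {i : Fin m // δ - 1 ≤ p ^ r i} ≤
      Nat.card {a : Fin m → ℕ // (∀ j, a j < p ^ r j) ∧ δ - 1 ≤ ∏ j, (p ^ r j - a j)} := by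
  classical
  have hdisj : Disjoint
      {a : Fin m → ℕ | (∀ j, a j < p ^ r j) ∧ δ ≤ ∏ j, (p ^ r j - a j)}
      {a : Fin m → ℕ | (∀ j, a j < p ^ r j) ∧ ∏ j, (p ^ r j - a j) = δ - 1} := by
    rw [Set.disjoint_left]
    intro a ha hb
    simp only [Set.mem_setOf_eq] at ha hb
    omega
  have hsub : {a : Fin m → ℕ | (∀ j, a j < p ^ r j) ∧ δ ≤ ∏ j, (p ^ r j - a j)} ∪
      {a : Fin m → ℕ | (∀ j, a j < p ^ r j) ∧ ∏ j, (p ^ r j - a j) = δ - 1} ⊆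
      {a : Fin m → ℕ | (∀ j, a j < p ^ r j) ∧ δ - 1 ≤ ∏ j, (p ^ r j - a j)} := by
    intro a ha
    simp only [Set.mem_union, Set.mem_setOf_eq] at ha ⊢
    rcases ha with ⟨h1, h2⟩ | ⟨h1, h2⟩ <;> exact ⟨h1, by omega⟩
  have hp2 : ∀ j : Fin m, 2 ≤ p ^ r j := fun j =>
    le_trans hp.two_le (Nat.le_self_pow (hr j).ne' p)
  have h1 : δ - 1 ≤ p ^ r ⟨1, hm⟩ := by omega
  have h0 : δ - 1 ≤ p ^ r ⟨0, by omega⟩ :=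
    h1.trans (Nat.pow_le_pow_right hp.one_le
      (hmono ⟨0, by omega⟩ ⟨1, hm⟩ (by simp [Fin.le_def])))
  -- the witness vectors
  have hwlt : ∀ i : Fin m, ∀ j, stmt17w p δ r i j < p ^ r j := by
    intro i j
    by_cases h : j = i
    · subst h; simp only [stmt17w, Function.update_self]; have := hp2 j; omega
    · simp only [stmt17w, Function.update_of_ne h]; have := hp2 j; omega
  have hwprod : ∀ i : Fin m, δ - 1 ≤ p ^ r i → ∏ j, (p ^ r j - stmt17w p δ r i j) = δ - 1 := by
    intro i hi
    rw [Finset.prod_eq_single i]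
    · simp only [stmt17w, Function.update_self]; omega
    · intro j _ hj
      simp only [stmt17w, Function.update_of_ne hj]; have := hp2 j; omega
    · simp
  -- finiteness
  have hfin : (Set.pi Set.univ fun j : Fin m => Set.Iio (p ^ r j)).Finite :=
    Set.Finite.pi fun j => Set.finite_Iio _
  have hA : {a : Fin m → ℕ | (∀ j, a j < p ^ r j) ∧ ∏ j, (p ^ r j - a j) = δ - 1}.Finite :=
    hfin.subset (by intro a ha; rw [Set.mem_pi]; intro j _; exact ha.1 j)
  have hB : {a : Fin m → ℕ | (∀ j, a j < p ^ r j) ∧ δ ≤ ∏ j, (p ^ r j - a j)}.Finite :=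
    hfin.subset (by intro a ha; rw [Set.mem_pi]; intro j _; exact ha.1 j)
  have hC : {a : Fin m → ℕ | (∀ j, a j < p ^ r j) ∧ δ - 1 ≤ ∏ j, (p ^ r j - a j)}.Finite :=
    hfin.subset (by intro a ha; rw [Set.mem_pi]; intro j _; exact ha.1 j)
  haveI instA : Finite {a : Fin m → ℕ // (∀ j, a j < p ^ r j) ∧ ∏ j, (p ^ r j - a j) = δ - 1} :=
    hA.to_subtype
  haveI instB : Finite {a : Fin m → ℕ // (∀ j, a j < p ^ r j) ∧ δ ≤ ∏ j, (p ^ r j - a j)} :=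
    hB.to_subtype
  haveI instC : Finite {a : Fin m → ℕ // (∀ j, a j < p ^ r j) ∧ δ - 1 ≤ ∏ j, (p ^ r j - a j)} :=
    hC.to_subtype
  -- K ≥ 2
  have hK2 : 2 ≤ Nat.card {i : Fin m // δ - 1 ≤ p ^ r i} := by
    have hf : Function.Injective (fun b : Fin 2 =>
        (if b = 0 then ⟨⟨0, by omega⟩, h0⟩ else ⟨⟨1, hm⟩, h1⟩ :
          {i : Fin m // δ - 1 ≤ p ^ r i})) := by
      intro b b' h
      fin_cases b <;> fin_cases b' <;> simp_all [Subtype.ext_iff, Fin.ext_iff]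
    simpa using Nat.card_le_card_of_injective _ hf
  -- K ≤ #{σ = δ-1}
  have hKA : Nat.card {i : Fin m // δ - 1 ≤ p ^ r i} ≤
      Nat.card {a : Fin m → ℕ // (∀ j, a j < p ^ r j) ∧ ∏ j, (p ^ r j - a j) = δ - 1} := by
    have hf : Function.Injective (fun i : {i : Fin m // δ - 1 ≤ p ^ r i} =>
        (⟨stmt17w p δ r i.1, fun j => hwlt i.1 j, hwprod i.1 i.2⟩ :
          {a : Fin m → ℕ // (∀ j, a j < p ^ r j) ∧ ∏ j, (p ^ r j - a j) = δ - 1})) := by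
      rintro ⟨i, hi⟩ ⟨i', hi'⟩ h
      simp only [Subtype.mk.injEq] at h ⊢
      by_contra hne
      have h2 := congrFun h i
      simp only [stmt17w, Function.update_self, Function.update_of_ne hne] at h2
      have := hp2 i
      omega
    exact Nat.card_le_card_of_injective _ hf
  refine ⟨hK2, hKA, ?_⟩
  -- third part
  have eA : Nat.card {a : Fin m → ℕ // (∀ j, a j < p ^ r j) ∧ ∏ j, (p ^ r j - a j) = δ - 1}
      = {a : Fin m → ℕ | (∀ j, a j < p ^ r j) ∧ ∏ j, (p ^ r j - a j) = δ - 1}.ncard :=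
    Nat.card_coe_set_eq _
  have eB : Nat.card {a : Fin m → ℕ // (∀ j, a j < p ^ r j) ∧ δ ≤ ∏ j, (p ^ r j - a j)}
      = {a : Fin m → ℕ | (∀ j, a j < p ^ r j) ∧ δ ≤ ∏ j, (p ^ r j - a j)}.ncard :=
    Nat.card_coe_set_eq _
  have eC : Nat.card {a : Fin m → ℕ // (∀ j, a j < p ^ r j) ∧ δ - 1 ≤ ∏ j, (p ^ r j - a j)}
      = {a : Fin m → ℕ | (∀ j, a j < p ^ r j) ∧ δ - 1 ≤ ∏ j, (p ^ r j - a j)}.ncard :=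
    Nat.card_coe_set_eq _
  calc Nat.card {a : Fin m → ℕ // (∀ j, a j < p ^ r j) ∧ δ ≤ ∏ j, (p ^ r j - a j)} +
        Nat.card {i : Fin m // δ - 1 ≤ p ^ r i}
      ≤ Nat.card {a : Fin m → ℕ // (∀ j, a j < p ^ r j) ∧ δ ≤ ∏ j, (p ^ r j - a j)} +
        Nat.card {a : Fin m → ℕ // (∀ j, a j < p ^ r j) ∧ ∏ j, (p ^ r j - a j) = δ - 1} :=
        Nat.add_le_add_left hKA _
    _ = ({a : Fin m → ℕ | (∀ j, a j < p ^ r j) ∧ δ ≤ ∏ j, (p ^ r j - a j)} ∪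
        {a : Fin m → ℕ | (∀ j, a j < p ^ r j) ∧ ∏ j, (p ^ r j - a j) = δ - 1}).ncard := by
        rw [eA, eB, Set.ncard_union_eq hdisj hB hA]
    _ ≤ {a : Fin m → ℕ | (∀ j, a j < p ^ r j) ∧ δ - 1 ≤ ∏ j, (p ^ r j - a j)}.ncard :=
        Set.ncard_le_ncard hsub hC
    _ = _ := eC.symm
end

section
/- Let N₁ ≥ N₂ ≥ ⋯ ≥ Nₘ ≥ 2 be integers and let s > 1 with s ≤ N_K for exactly K indices. If τ(s) (the number of tuples (d₁,…,dₘ), 1 ≤ dᵢ ≤ Nᵢ, ∏dᵢ = s) equals K, then s is prime; conversely if s is prime then τ(s) = K. That is, τ(s) = K if and only if s is prime (for K ≥ 2). -/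
/-- with `N₁ ≥ ⋯ ≥ Nₘ ≥ 2`, `s > 1`, and `K = #{i : s ≤ Nᵢ} ≥ 2`,
the number `τ(s)` of tuples `(d₁,…,dₘ)` with `1 ≤ dᵢ ≤ Nᵢ` and `∏ dᵢ = s` equals `K`
if and only if `s` is prime. -/
theorem stmt19 (m : ℕ) (N : Fin m → ℕ) (hN : ∀ i, 2 ≤ N i)
    (hmono : ∀ i j : Fin m, i ≤ j → N j ≤ N i) (s : ℕ) (hs : 1 < s)
    (hK : 2 ≤ Nat.card {i : Fin m // s ≤ N i}) :
    Nat.card {d : Fin m → ℕ // (∀ i, 1 ≤ d i ∧ d i ≤ N i) ∧ ∏ i, d i = s} =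
      Nat.card {i : Fin m // s ≤ N i} ↔ s.Prime := by
  classical
  have hs0 : 0 < s := by omega
  set D := {d : Fin m → ℕ // (∀ i, 1 ≤ d i ∧ d i ≤ N i) ∧ ∏ i, d i = s} with hD
  set I := {i : Fin m // s ≤ N i} with hI
  -- every entry divides s, hence ≤ s
  have hdvd : ∀ (d : D) (i : Fin m), d.1 i ∣ s := by
    intro d i
    have h := Finset.dvd_prod_of_mem d.1 (Finset.mem_univ i)
    rwa [d.2.2] at h
  have hles : ∀ (d : D) (i : Fin m), d.1 i ≤ s := fun d i =>
    Nat.le_of_dvd hs0 (hdvd d i)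
  -- D is finite
  have hfinD : Finite D := by
    apply Finite.of_injective (fun d : D => fun i => (⟨d.1 i, Nat.lt_succ_of_le (hles d i)⟩ : Fin (s+1)))
    intro d d' h
    apply Subtype.ext
    funext i
    have := congrFun h i
    simpa using congrArg Fin.val this
  -- the single-s tuple
  have hsingle : ∀ i : I, ((fun j => if j = i.1 then s else 1) : Fin m → ℕ) ∈
      {d : Fin m → ℕ | (∀ i, 1 ≤ d i ∧ d i ≤ N i) ∧ ∏ i, d i = s} := by
    intro i
    constructor
    · intro j
      by_cases hj : j = i.1
      · simp only [hj, if_pos rfl]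
        exact ⟨hs0, i.2⟩
      · simp only [if_neg hj]
        exact ⟨le_refl 1, by have := hN j; omega⟩
    · simp
  -- injection I → D
  have hIinD : Nat.card I ≤ Nat.card D := by
    apply Nat.card_le_card_of_injective
      (fun i : I => (⟨fun j => if j = i.1 then s else 1, hsingle i⟩ : D))
    intro i i' h
    apply Subtype.ext
    by_contra hne
    have hne' : i.1 ≠ i'.1 := fun h' => hne h'
    have := congrFun (congrArg Subtype.val h) i.1
    simp [hne'] at this
    omega
  -- uniqueness of the big entry when two entries equal s is impossible
  have hnot2 : ∀ (d : D) (i j : Fin m), i ≠ j → d.1 i = s → d.1 j = s → False := by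
    intro d i j hij hi hj
    have hsub : ({i, j} : Finset (Fin m)) ⊆ Finset.univ := Finset.subset_univ _
    have hdvd2 : (∏ k ∈ ({i, j} : Finset (Fin m)), d.1 k) ∣ ∏ k, d.1 k :=
      Finset.prod_dvd_prod_of_subset _ _ _ hsub
    rw [Finset.prod_pair hij, hi, hj, d.2.2] at hdvd2
    have := Nat.le_of_dvd hs0 hdvd2
    nlinarith
  constructor
  · -- τ(s) = K → s prime; contrapositive
    intro hcard
    by_contra hnp
    obtain ⟨a, hads, ha2, halt⟩ := Nat.exists_dvd_of_not_prime2 hs hnp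
    obtain ⟨b, hab⟩ := hads
    have hb2 : 2 ≤ b := by nlinarith
    have hblt : b < s := by nlinarith
    -- two distinct indices in I
    have : Nontrivial I := Finite.one_lt_card_iff_nontrivial.mp (by omega)
    obtain ⟨i₀, j₀, hij⟩ := this
    -- the a,b tuple
    have habmem : ((fun j => (if j = i₀.1 then a else 1) * (if j = j₀.1 then b else 1)) :
        Fin m → ℕ) ∈ {d : Fin m → ℕ | (∀ i, 1 ≤ d i ∧ d i ≤ N i) ∧ ∏ i, d i = s} := by
      have hij' : i₀.1 ≠ j₀.1 := fun h => hij (Subtype.ext h)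
      constructor
      · intro j
        by_cases h1 : j = i₀.1
        · subst h1
          simp [hij', Ne.symm hij']
          constructor
          · omega
          · exact le_trans (le_of_lt halt) i₀.2
        · by_cases h2 : j = j₀.1
          · subst h2
            simp [h1]
            constructor
            · omega
            · exact le_trans (le_of_lt hblt) j₀.2
          · simp only [if_neg h1, if_neg h2, mul_one]
            exact ⟨le_refl 1, by have := hN j; omega⟩
      · rw [Finset.prod_mul_distrib]
        simp [Finset.prod_ite_eq', hab]
    -- injection Option I → D
    have hinj : Nat.card (Option I) ≤ Nat.card D := by
      apply Nat.card_le_card_of_injective (fun o : Option I =>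
        match o with
        | some i => (⟨fun j => if j = i.1 then s else 1, hsingle i⟩ : D)
        | none => (⟨fun j => (if j = i₀.1 then a else 1) * (if j = j₀.1 then b else 1), habmem⟩ : D))
      intro o o' h
      have hij' : i₀.1 ≠ j₀.1 := fun h' => hij (Subtype.ext h')
      match o, o' with
      | some i, some i' =>
        congr 1
        apply Subtype.ext
        by_contra hne
        have := congrFun (congrArg Subtype.val h) i.1
        simp [hne] at this
        omega
      | none, none => rfl
      | some i, none =>
        exfalso
        rcases eq_or_ne i.1 i₀.1 with he | he
        · have := congrFun (congrArg Subtype.val h) j₀.1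
          have hne1 : (j₀.1 : Fin m) ≠ i.1 := by rw [he]; exact Ne.symm hij'
          simp [hne1, Ne.symm hij'] at this
          omega
        · have hne1 : (i₀.1 : Fin m) ≠ i.1 := Ne.symm he
          have := congrFun (congrArg Subtype.val h) i₀.1
          simp [hne1, hij'] at this
          omega
      | none, some i =>
        exfalso
        rcases eq_or_ne i.1 i₀.1 with he | he
        · have := congrFun (congrArg Subtype.val h) j₀.1
          have hne1 : (j₀.1 : Fin m) ≠ i.1 := by rw [he]; exact Ne.symm hij'
          simp [hne1, Ne.symm hij'] at this
          omega
        · have hne1 : (i₀.1 : Fin m) ≠ i.1 := Ne.symm he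
          have := congrFun (congrArg Subtype.val h) i₀.1
          simp [hne1, hij'] at this
          omega
    rw [Finite.card_option] at hinj
    omega
  · -- s prime → τ(s) = K
    intro hp
    refine le_antisymm ?_ hIinD
    -- injection D → I
    have hex : ∀ d : D, ∃ i, d.1 i = s := by
      intro d
      by_contra hno
      push_neg at hno
      have h1 : ∀ i : Fin m, d.1 i = 1 := by
        intro i
        rcases (Nat.Prime.eq_one_or_self_of_dvd hp _ (hdvd d i)) with h | h
        · exact h
        · exact absurd h (hno i)
      have := d.2.2
      rw [Finset.prod_eq_one (fun i _ => h1 i)] at this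
      omega
    apply Nat.card_le_card_of_injective (fun d : D =>
      (⟨(hex d).choose, by have h1 := (d.2.1 (hex d).choose).2; have h2 := (hex d).choose_spec; omega⟩ : I))
    intro d d' h
    have hi := (hex d).choose_spec
    have hi' := (hex d').choose_spec
    have heq : (hex d).choose = (hex d').choose := congrArg Subtype.val h
    apply Subtype.ext
    funext j
    rcases eq_or_ne j (hex d).choose with hj | hj
    · rw [hj, hi, heq, hi']
    · have h1 : d.1 j = 1 := by
        rcases (Nat.Prime.eq_one_or_self_of_dvd hp _ (hdvd d j)) with h | h
        · exact h
        · exact absurd (hnot2 d _ _ hj h hi) id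
      have h1' : d'.1 j = 1 := by
        rcases (Nat.Prime.eq_one_or_self_of_dvd hp _ (hdvd d' j)) with h | h
        · exact h
        · exact absurd (hnot2 d' _ _ (heq ▸ hj) h hi') id
      rw [h1, h1']
end
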